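/- Chernoff bound for the hypothesis-testing error: if H ~ Binomial(n, p) with p < 1/2, then P(H ≥ n/2) ≤ e^{-n·D(1/2 ‖ p)}, where D(a‖b) = a log(a/b) + (1-a) log((1-a)/(1-b)) is the binary KL divergence. -/
import Mathlib


open Finset

/-- Binary KL divergence `D(a‖b) = a log(a/b) + (1-a) log((1-a)/(1-b))`. -/
noncomputable def klBin (a b : ℝ) : ℝ :=
  a * Real.log (a / b) + (1 - a) * Real.log ((1 - a) / (1 - b))

/-- Chernoff bound: if `H ~ Binomial(n, p)` with `p < 1/2`, then
`P(H ≥ n/2) ≤ exp(-n · D(1/2 ‖ p))`. -/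
theorem stmt6 (n : ℕ) (hn : 0 < n) (p : ℝ) (hp0 : 0 < p) (hp : p < 1 / 2) :
    (∑ i ∈ Finset.range (n + 1),
        if (n : ℝ) / 2 ≤ (i : ℝ) then
          (n.choose i : ℝ) * p ^ i * (1 - p) ^ (n - i) else 0)
      ≤ Real.exp (-(n : ℝ) * klBin (1 / 2) p) := by
  have hq : (0:ℝ) < 1 - p := by linarith
  have hlog : Real.log p ≤ Real.log (1 - p) := Real.log_le_log hp0 (by linarith)
  set M : ℝ := Real.exp (((n:ℝ)/2) * (Real.log p + Real.log (1 - p))) with hM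
  have hterm : ∀ i ∈ Finset.range (n+1),
      (if (n : ℝ) / 2 ≤ (i : ℝ) then
          (n.choose i : ℝ) * p ^ i * (1 - p) ^ (n - i) else 0)
        ≤ (n.choose i : ℝ) * M := by
    intro i hi
    have hin : i ≤ n := Nat.lt_succ_iff.mp (Finset.mem_range.mp hi)
    split_ifs with h
    · have hcast : ((n - i : ℕ) : ℝ) = (n : ℝ) - i := by
        push_cast [Nat.cast_sub hin]; ring
      have hpow : p ^ i * (1 - p) ^ (n - i) ≤ M := by
        have h1 : p ^ i = Real.exp ((i : ℝ) * Real.log p) := by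
          rw [Real.exp_nat_mul, Real.exp_log hp0]
        have h2 : (1 - p) ^ (n - i) = Real.exp (((n - i : ℕ) : ℝ) * Real.log (1 - p)) := by
          rw [Real.exp_nat_mul, Real.exp_log hq]
        rw [h1, h2, ← Real.exp_add, hM, Real.exp_le_exp, hcast]
        nlinarith [mul_le_mul_of_nonneg_left hlog (by linarith : (0:ℝ) ≤ (i:ℝ) - (n:ℝ)/2)]
      have hc : (0:ℝ) ≤ (n.choose i : ℝ) := by positivity
      calc (n.choose i : ℝ) * p ^ i * (1 - p) ^ (n - i)
          = (n.choose i : ℝ) * (p ^ i * (1 - p) ^ (n - i)) := by ring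
        _ ≤ (n.choose i : ℝ) * M := by
            exact mul_le_mul_of_nonneg_left hpow hc
    · positivity
  calc (∑ i ∈ Finset.range (n + 1),
        if (n : ℝ) / 2 ≤ (i : ℝ) then
          (n.choose i : ℝ) * p ^ i * (1 - p) ^ (n - i) else 0)
      ≤ ∑ i ∈ Finset.range (n+1), (n.choose i : ℝ) * M := Finset.sum_le_sum hterm
    _ = (2:ℝ) ^ n * M := by
        rw [← Finset.sum_mul, ← Nat.cast_sum, Nat.sum_range_choose]
        push_cast
        ring
    _ = Real.exp (-(n : ℝ) * klBin (1 / 2) p) := by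
        have h2 : (2:ℝ) ^ n = Real.exp ((n:ℝ) * Real.log 2) := by
          rw [Real.exp_nat_mul, Real.exp_log (by norm_num : (0:ℝ) < 2)]
        rw [h2, hM, ← Real.exp_add]
        congr 1
        have e1 : Real.log ((1:ℝ)/2 / p) = -Real.log 2 - Real.log p := by
          rw [Real.log_div (by norm_num) (ne_of_gt hp0), Real.log_div one_ne_zero (by norm_num)]
          simp
        have e2 : Real.log ((1 - (1:ℝ)/2) / (1 - p)) = -Real.log 2 - Real.log (1 - p) := by
          norm_num
          rw [Real.log_div (by norm_num) (ne_of_gt hq), Real.log_div one_ne_zero (by norm_num)]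
          simp
        rw [klBin, e1, e2]
        ring
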